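/- A square-free positive integer m is a congruent number if and only if E(ℚ(√m))⁻ is strictly larger than E[2]. -/

import Mathlib

open WeierstrassCurve WeierstrassCurve.Affine

/-- A positive integer `n` is a *congruent number* if it is the area of a right triangle
with rational side lengths. -/
def IsCongruentNumber (n : ℕ) : Prop :=
  ∃ a b c : ℚ, 0 < a ∧ 0 < b ∧ 0 < c ∧ a ^ 2 + b ^ 2 = c ^ 2 ∧ a * b / 2 = n

/-- The elliptic curve `E : y² = x³ − x` over `ℚ`. -/
def E : WeierstrassCurve.Affine ℚ := ⟨0, 0, 0, -1, 0⟩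

open Classical in
/-- The subgroup `E(K)⁻` of points of `E` over `K` sent to their negatives by `σ`. -/
noncomputable def minusSubgroup (K : Type) [Field K] [Algebra ℚ K] (σ : K ≃ₐ[ℚ] K) :
    AddSubgroup (E.baseChange K).Point :=
  (Affine.Point.map (W' := E) σ.toAlgHom + AddMonoidHom.id (E.baseChange K).Point).ker

lemma congruent_of_point (m : ℕ) (hm0 : 0 < m) (X Y : ℚ) (hY : Y ≠ 0)
    (hXY : Y ^ 2 = X ^ 3 - (m:ℚ) ^ 2 * X) : IsCongruentNumber m := by
  have hmQ : (0:ℚ) < m := by exact_mod_cast hm0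
  have hYa : (0:ℚ) < |Y| := abs_pos.mpr hY
  have hY2 : |Y| ^ 2 = Y ^ 2 := sq_abs Y
  set a0 : ℚ := (X ^ 2 - m ^ 2) / |Y| with ha0
  set b0 : ℚ := 2 * m * X / |Y| with hb0
  have hab : a0 * b0 = 2 * m := by
    rw [ha0, hb0, div_mul_div_comm, ← sq, hY2]
    rw [div_eq_iff (by positivity)]
    linear_combination -2 * (m:ℚ) * hXY
  have hab0 : a0 ≠ 0 ∧ b0 ≠ 0 := by
    constructor <;> rintro h <;> rw [h] at hab <;> simp at hab <;> nlinarith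
  refine ⟨|a0|, |b0|, (X ^ 2 + m ^ 2) / |Y|, abs_pos.mpr hab0.1, abs_pos.mpr hab0.2, by positivity, ?_, ?_⟩
  · rw [sq_abs, sq_abs, ha0, hb0, div_pow, div_pow, div_pow, ← add_div]
    congr 1
    ring
  · rw [← abs_mul, hab, abs_of_pos (by positivity)]
    ring

lemma point_of_congruent (m : ℕ) (h : IsCongruentNumber m) :
    ∃ X Y : ℚ, Y ≠ 0 ∧ Y ^ 2 = X ^ 3 - (m:ℚ) ^ 2 * X := by
  obtain ⟨a, b, c, ha, hb, hc, hpyth, harea⟩ := h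
  have hm : (m:ℚ) = a * b / 2 := harea.symm
  refine ⟨(m:ℚ) * (a + c) / b, 2 * (m:ℚ) ^ 2 * (a + c) / b ^ 2, ?_, ?_⟩
  · have : (0:ℚ) < m := by rw [hm]; positivity
    positivity
  · rw [hm]
    have hb' : b ≠ 0 := ne_of_gt hb
    field_simp
    linear_combination hpyth



variable {K : Type} [Field K] [Algebra ℚ K]

lemma EK_equation_iff {x y : K} :
    (WeierstrassCurve.baseChange E K).toAffine.Equation x y ↔ y ^ 2 = x ^ 3 - x := by
  rw [equation_iff]
  simp [E, WeierstrassCurve.baseChange, WeierstrassCurve.map]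
  constructor <;> intro h <;> linear_combination h

lemma EK_negY (x y : K) :
    (WeierstrassCurve.baseChange E K).toAffine.negY x y = -y := by
  simp [negY, E, WeierstrassCurve.baseChange, WeierstrassCurve.map]

lemma EK_nonsingular {x y : K} (he : y ^ 2 = x ^ 3 - x) (hy : y ≠ 0) :
    (WeierstrassCurve.baseChange E K).toAffine.Nonsingular x y := by
  haveI : CharZero K := charZero_of_injective_algebraMap (algebraMap ℚ K).injective
  rw [nonsingular_iff]
  refine ⟨EK_equation_iff.mpr he, Or.inr ?_⟩
  simp only [E, WeierstrassCurve.baseChange, WeierstrassCurve.map]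
  simp only [map_zero, mul_zero, zero_mul, sub_zero, mul_zero]
  intro h
  apply hy
  have : (2:K) * y = 0 := by linear_combination h
  simpa using this

lemma exists_repr (K : Type) [Field K] [Algebra ℚ K] (sm : K) (q : ℚ)
    (hsm : sm ^ 2 = algebraMap ℚ K q) (hK : Algebra.adjoin ℚ {sm} = ⊤) (t : K) :
    ∃ a b : ℚ, t = algebraMap ℚ K a + algebraMap ℚ K b * sm := by
  let S : Subalgebra ℚ K :=
  { carrier := {t | ∃ a b : ℚ, t = algebraMap ℚ K a + algebraMap ℚ K b * sm}
    add_mem' := by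
      rintro x y ⟨a, b, rfl⟩ ⟨c, d, rfl⟩
      exact ⟨a + c, b + d, by simp only [map_add]; ring⟩
    mul_mem' := by
      rintro x y ⟨a, b, rfl⟩ ⟨c, d, rfl⟩
      refine ⟨a * c + b * d * q, a * d + b * c, ?_⟩
      simp only [map_add, map_mul]
      linear_combination (algebraMap ℚ K b * algebraMap ℚ K d) * hsm
    algebraMap_mem' := fun r => ⟨r, 0, by simp⟩ }
  have hle : Algebra.adjoin ℚ {sm} ≤ S := Algebra.adjoin_le (by
    rintro x hx
    rw [Set.mem_singleton_iff] at hx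
    exact ⟨0, 1, by simp [hx]⟩)
  exact hle (hK ▸ Algebra.mem_top : t ∈ Algebra.adjoin ℚ {sm})


open Classical in
/-- a square-free positive integer `m` is congruent iff `E(ℚ(√m))⁻` is
strictly larger than `E[2]`, i.e. contains a point not killed by `2`. -/
theorem congruent_iff_minus_part_gt_two_torsion (m : ℕ) (hm0 : 0 < m) (hm : Squarefree m)
    (K : Type) [Field K] [Algebra ℚ K]
    (sm : K) (hsm : sm ^ 2 = (m : K)) (hK : Algebra.adjoin ℚ {sm} = ⊤)
    (σ : K ≃ₐ[ℚ] K) (hσ : σ sm = -sm) :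
    IsCongruentNumber m ↔ ∃ P ∈ minusSubgroup K σ, ¬2 • P = 0 := by
  haveI : CharZero K := charZero_of_injective_algebraMap (algebraMap ℚ K).injective
  have hmQ : (m:ℚ) ≠ 0 := Nat.cast_ne_zero.mpr hm0.ne'
  have hsm' : sm ^ 2 = algebraMap ℚ K (m:ℚ) := by rw [map_natCast]; exact hsm
  have hsm0 : sm ≠ 0 := fun h =>
    (Nat.cast_ne_zero (R := K)).mpr hm0.ne' (by rw [← hsm, h]; norm_num)
  constructor
  · intro h
    obtain ⟨X, Y, hY, hXY⟩ := point_of_congruent m h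
    set x : K := algebraMap ℚ K (X / m) with hxdef
    set y : K := algebraMap ℚ K (Y / m ^ 2) * sm with hydef
    have he : y ^ 2 = x ^ 3 - x := by
      rw [hxdef, hydef, mul_pow, hsm', ← map_pow, ← map_mul, ← map_pow, ← map_sub]
      congr 1
      field_simp
      linear_combination hXY
    have hy : y ≠ 0 := mul_ne_zero (by
      simp only [ne_eq, map_eq_zero, div_eq_zero_iff, not_or]
      exact ⟨hY, by positivity⟩) hsm0
    refine ⟨Point.some _ _ (EK_nonsingular he hy), ?_, ?_⟩
    · rw [minusSubgroup, AddMonoidHom.mem_ker, AddMonoidHom.add_apply, AddMonoidHom.id_apply,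
        Point.map_some]
      refine Point.add_of_Y_eq ?_ ?_
      · simp [hxdef, AlgHom.commutes]
      · rw [EK_negY, hydef]
        simp only [map_mul, AlgHom.commutes, AlgEquiv.coe_algHom]
        rw [hσ]
        ring
    · intro h2
      rw [two_smul] at h2
      rw [Point.add_self_of_Y_ne (by
        rw [EK_negY]
        intro hh
        apply hy
        have h2y : (2:K) * y = 0 := by linear_combination hh
        simpa using h2y)] at h2
      exact Point.some_ne_zero _ h2
  · rintro ⟨P, hmem, h2⟩
    rw [minusSubgroup, AddMonoidHom.mem_ker, AddMonoidHom.add_apply, AddMonoidHom.id_apply] at hmem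
    rcases P with _ | @⟨x, y, hP⟩
    · exact absurd (by rw [← Point.zero_def, smul_zero]) h2
    rw [Point.map_some] at hmem
    by_cases hx : σ.toAlgHom x = x
    swap
    · rw [Point.add_of_X_ne hx] at hmem
      exact absurd hmem (Point.some_ne_zero _)
    by_cases hy : σ.toAlgHom y = (WeierstrassCurve.baseChange E K).toAffine.negY x y
    swap
    · rw [Point.add_of_Y_ne hy] at hmem
      exact absurd hmem (Point.some_ne_zero _)
    rw [EK_negY] at hy
    have hy0 : y ≠ 0 := by
      intro h0
      apply h2
      rw [two_smul]
      exact Point.add_self_of_Y_eq (by rw [EK_negY, h0, neg_zero])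
    obtain ⟨a, b, hxab⟩ := exists_repr K sm m hsm' hK x
    obtain ⟨c, d, hycd⟩ := exists_repr K sm m hsm' hK y
    have hb : b = 0 := by
      have := hx
      rw [hxab] at this
      simp only [map_add, map_mul, AlgHom.commutes, AlgEquiv.coe_algHom] at this
      rw [hσ] at this
      have h2b : algebraMap ℚ K b * sm = 0 := by linear_combination (-(1:K)/2) * this
      rcases mul_eq_zero.mp h2b with h' | h'
      · exact (map_eq_zero _).mp h'
      · exact absurd h' hsm0
    have hc : c = 0 := by
      have := hy
      rw [hycd] at this
      simp only [map_add, map_mul, AlgHom.commutes, AlgEquiv.coe_algHom] at this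
      rw [hσ] at this
      have h2c : algebraMap ℚ K c = 0 := by linear_combination ((1:K)/2) * this
      exact (map_eq_zero _).mp h2c
    rw [hb, map_zero, zero_mul, add_zero] at hxab
    rw [hc, map_zero, zero_add] at hycd
    have he := EK_equation_iff.mp hP.1
    have hd0 : d ≠ 0 := by
      intro h'
      rw [h', map_zero, zero_mul] at hycd
      exact hy0 hycd
    have heq : d ^ 2 * (m:ℚ) = a ^ 3 - a := by
      apply (algebraMap ℚ K).injective
      simp only [map_mul, map_pow, map_sub]
      rw [hxab, hycd] at he
      linear_combination he - (algebraMap ℚ K d) ^ 2 * hsm'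
    refine congruent_of_point m hm0 ((m:ℚ) * a) ((m:ℚ) ^ 2 * d) (by positivity) ?_
    linear_combination (m:ℚ) ^ 3 * heq
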